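/- For non-negative integers k, m, ℓ with ℓ ≤ k − m, with c_k := k!·√π/Γ(k+1/2) and b_{k,ℓ,m} := (2k+1)!/((2ℓ)!(2m)!(2(k−ℓ−m)+1)!), the identity ((1/2)^{2(k−ℓ−m)} · b_{k,ℓ,m}) / (c_k · C(k+1/2, m) · C(k−1/2, k−m)) = C(2(k−m)+1, 2ℓ) · (1/4)^{k−ℓ−m} holds, where C(x, s) := Γ(x+1)/(Γ(s+1)Γ(x−s+1)) is the generalized binomial coefficient. -/

import Mathlib

open Real

/-- `c_k = k!·√π/Γ(k+1/2)`. -/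
noncomputable def ck (k : ℕ) : ℝ :=
  (Nat.factorial k : ℝ) * Real.sqrt Real.pi / Real.Gamma ((k : ℝ) + 1/2)

/-- Generalized binomial coefficient `C(x, s) = Γ(x+1)/(Γ(s+1)Γ(x−s+1))`. -/
noncomputable def gbinom (x : ℝ) (s : ℕ) : ℝ :=
  Real.Gamma (x + 1) / (Real.Gamma ((s : ℝ) + 1) * Real.Gamma (x - (s : ℝ) + 1))

lemma gamma_nat_add_half (n : ℕ) :
    Real.Gamma ((n : ℝ) + 1/2)
      = Real.sqrt Real.pi * (Nat.factorial (2*n) : ℝ) / (4^n * (Nat.factorial n : ℝ)) := by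
  induction n with
  | zero => simpa using Real.Gamma_one_half_eq
  | succ n ih =>
    have h : ((n+1 : ℕ) : ℝ) + 1/2 = ((n : ℝ) + 1/2) + 1 := by push_cast; ring
    have hne : ((n : ℝ) + 1/2) ≠ 0 := by positivity
    rw [h, Real.Gamma_add_one hne, ih]
    have e1 : 2*(n+1) = (2*n+1)+1 := by ring
    rw [e1, Nat.factorial_succ, Nat.factorial_succ, Nat.factorial_succ]
    have h4 : (4 : ℝ)^(n+1) = 4 * 4^n := by ring
    have hfn : ((Nat.factorial n : ℝ)) ≠ 0 := Nat.cast_ne_zero.mpr (Nat.factorial_ne_zero n)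
    have h4n : (4 : ℝ)^n ≠ 0 := by positivity
    field_simp
    push_cast
    ring

/-- `((1/2)^{2(k−ℓ−m)} b_{k,ℓ,m}) / (c_k C(k+1/2, m) C(k−1/2, k−m)) = C(2(k−m)+1, 2ℓ)(1/4)^{k−ℓ−m}`
for non-negative integers `m ≤ k`, `ℓ ≤ k − m`, where
`b_{k,ℓ,m} = (2k+1)!/((2ℓ)!(2m)!(2(k−ℓ−m)+1)!)`. -/
theorem multinomial_gamma_quotient (k m l : ℕ) (hm : m ≤ k) (hl : l ≤ k - m) :
    ((1/2 : ℝ) ^ (2 * (k - l - m))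
        * ((Nat.factorial (2 * k + 1) : ℝ)
          / (Nat.factorial (2 * l) * Nat.factorial (2 * m)
              * Nat.factorial (2 * (k - l - m) + 1))))
      / (ck k * gbinom ((k : ℝ) + 1/2) m * gbinom ((k : ℝ) - 1/2) (k - m))
      = (Nat.choose (2 * (k - m) + 1) (2 * l) : ℝ) * (1/4 : ℝ) ^ (k - l - m) := by
  obtain ⟨a, rfl⟩ : ∃ a, k = m + a := ⟨k - m, by omega⟩
  obtain ⟨d, rfl⟩ : ∃ d, a = l + d := ⟨a - l, by omega⟩
  set k := m + (l + d) with hk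
  have h1 : k - l - m = d := by omega
  have h2 : k - m = l + d := by omega
  rw [h1, h2]
  -- Gamma evaluations
  have hG1 : Real.Gamma ((k : ℝ) + 1/2)
      = Real.sqrt Real.pi * (Nat.factorial (2*k) : ℝ) / (4^k * (Nat.factorial k : ℝ)) :=
    gamma_nat_add_half k
  have hG2 : Real.Gamma ((k : ℝ) + 1/2 + 1)
      = Real.sqrt Real.pi * (Nat.factorial (2*(k+1)) : ℝ)
          / (4^(k+1) * (Nat.factorial (k+1) : ℝ)) := by
    have : (k : ℝ) + 1/2 + 1 = ((k+1 : ℕ) : ℝ) + 1/2 := by push_cast; ring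
    rw [this]; exact gamma_nat_add_half (k+1)
  have hG3 : Real.Gamma ((k : ℝ) + 1/2 - (m : ℝ) + 1)
      = Real.sqrt Real.pi * (Nat.factorial (2*(l+d+1)) : ℝ)
          / (4^(l+d+1) * (Nat.factorial (l+d+1) : ℝ)) := by
    have : (k : ℝ) + 1/2 - (m : ℝ) + 1 = ((l+d+1 : ℕ) : ℝ) + 1/2 := by
      rw [hk]; push_cast; ring
    rw [this]; exact gamma_nat_add_half (l+d+1)
  have hG4 : Real.Gamma ((m : ℝ) + 1) = (Nat.factorial m : ℝ) :=
    Real.Gamma_nat_eq_factorial m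
  have hG5 : Real.Gamma (((l+d : ℕ) : ℝ) + 1) = (Nat.factorial (l+d) : ℝ) :=
    Real.Gamma_nat_eq_factorial (l+d)
  have hG6 : Real.Gamma ((k : ℝ) - 1/2 - ((l+d : ℕ) : ℝ) + 1)
      = Real.sqrt Real.pi * (Nat.factorial (2*m) : ℝ) / (4^m * (Nat.factorial m : ℝ)) := by
    have : (k : ℝ) - 1/2 - ((l+d : ℕ) : ℝ) + 1 = (m : ℝ) + 1/2 := by
      rw [hk]; push_cast; ring
    rw [this]; exact gamma_nat_add_half m
  have hG7 : Real.Gamma ((k : ℝ) - 1/2 + 1) = Real.Gamma ((k : ℝ) + 1/2) := by ring_nf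
  -- choose
  have hch : ((2*(l+d)+1).choose (2*l) : ℝ)
      = (Nat.factorial (2*(l+d)+1) : ℝ)
        / ((Nat.factorial (2*l) : ℝ) * (Nat.factorial (2*d+1) : ℝ)) := by
    have h := Nat.choose_mul_factorial_mul_factorial
      (show 2*l ≤ 2*(l+d)+1 by omega)
    have hsub : 2*(l+d)+1 - 2*l = 2*d+1 := by omega
    rw [hsub] at h
    have := congrArg (fun x : ℕ => (x : ℝ)) h
    push_cast at this
    field_simp
    linarith [this]
  rw [ck, gbinom, gbinom, hG1, hG2, hG3, hG4, hG5, hG6, hG7, hG1, hch]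
  -- factorial expansions
  have f1 : (Nat.factorial (2*(k+1)) : ℝ)
      = (2*(k:ℝ)+2) * (2*(k:ℝ)+1) * (Nat.factorial (2*k) : ℝ) := by
    have e : 2*(k+1) = (2*k+1)+1 := by ring
    rw [e, Nat.factorial_succ, Nat.factorial_succ]; push_cast; ring
  have f2 : (Nat.factorial (k+1) : ℝ) = ((k:ℝ)+1) * (Nat.factorial k : ℝ) := by
    rw [Nat.factorial_succ]; push_cast; ring
  have f3 : (Nat.factorial (2*k+1) : ℝ) = (2*(k:ℝ)+1) * (Nat.factorial (2*k) : ℝ) := by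
    rw [Nat.factorial_succ]; push_cast; ring
  have f4 : (Nat.factorial (2*(l+d+1)) : ℝ)
      = (2*((l:ℝ)+d)+2) * (Nat.factorial (2*(l+d)+1) : ℝ) := by
    have e : 2*(l+d+1) = (2*(l+d)+1)+1 := by ring
    rw [e, Nat.factorial_succ]; push_cast; ring
  have f5 : (Nat.factorial (l+d+1) : ℝ) = ((l:ℝ)+d+1) * (Nat.factorial (l+d) : ℝ) := by
    rw [Nat.factorial_succ]; push_cast; ring
  rw [f1, f2, f3, f4, f5]
  have hp : (1/2 : ℝ)^(2*d) = (1/4 : ℝ)^d := by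
    rw [pow_mul]; norm_num
  rw [hp]
  -- clear denominators
  have hsp : Real.sqrt Real.pi ≠ 0 := by positivity
  have hfk : (Nat.factorial k : ℝ) ≠ 0 := Nat.cast_ne_zero.mpr (Nat.factorial_ne_zero _)
  have hf2k : (Nat.factorial (2*k) : ℝ) ≠ 0 := Nat.cast_ne_zero.mpr (Nat.factorial_ne_zero _)
  have hfm : (Nat.factorial m : ℝ) ≠ 0 := Nat.cast_ne_zero.mpr (Nat.factorial_ne_zero _)
  have hf2m : (Nat.factorial (2*m) : ℝ) ≠ 0 := Nat.cast_ne_zero.mpr (Nat.factorial_ne_zero _)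
  have hfld : (Nat.factorial (l+d) : ℝ) ≠ 0 := Nat.cast_ne_zero.mpr (Nat.factorial_ne_zero _)
  have hf2ld : (Nat.factorial (2*(l+d)+1) : ℝ) ≠ 0 := Nat.cast_ne_zero.mpr (Nat.factorial_ne_zero _)
  have hf2l : (Nat.factorial (2*l) : ℝ) ≠ 0 := Nat.cast_ne_zero.mpr (Nat.factorial_ne_zero _)
  have hf2d : (Nat.factorial (2*d+1) : ℝ) ≠ 0 := Nat.cast_ne_zero.mpr (Nat.factorial_ne_zero _)
  have h4k : (4:ℝ)^k ≠ 0 := by positivity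
  have h4m : (4:ℝ)^m ≠ 0 := by positivity
  have h4ld : (4:ℝ)^(l+d+1) ≠ 0 := by positivity
  have hK : (2*(k:ℝ)+1) ≠ 0 := by positivity
  have hK2 : ((k:ℝ)+1) ≠ 0 := by positivity
  have hL : ((l:ℝ)+d+1) ≠ 0 := by positivity
  have hkc : (k : ℝ) = (m : ℝ) + (l : ℝ) + (d : ℝ) := by rw [hk]; push_cast; ring
  rw [hkc]
  field_simp
  ring
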